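/- For every v ∈ ℝ one has the two identities σ_{f̄₁}(ḡ(v)) = ∫_K σ_{f₁}(g(v + V(y))) d𝔪(y) and h_{f̄₁}(ḡ(v)) = ∫_K h_{f₁}(g(v + V(y))) d𝔪(y); that is, the noise coefficient σ and the correction coefficient h associated with the homogenized flux f̄₁ are, after composition with ḡ, the 𝔪-averages of the corresponding coefficients associated with f₁. -/

import Mathlib

open MeasureTheory

lemma cont_of_inverse {f g : ℝ → ℝ} (hmono : StrictMono f)
    (hg₂ : Function.RightInverse g f) : Continuous g := by
  have hsurj : Function.Surjective f := fun y => ⟨g y, hg₂ y⟩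
  have hge : g = fun y => (StrictMono.orderIsoOfSurjective f hmono hsurj).symm y := by
    funext y
    apply hmono.injective
    rw [hg₂ y, StrictMono.orderIsoOfSurjective_self_symm_apply f hmono hsurj]
  rw [hge]
  exact (StrictMono.orderIsoOfSurjective f hmono hsurj).symm.continuous

lemma inverse_hasDerivAt {f g F : ℝ → ℝ} {δ : ℝ} (hδ : 0 < δ)
    (hF : ∀ u, HasDerivAt f (F u) u) (hFlb : ∀ u, δ ≤ F u)
    (hg₂ : Function.RightInverse g f) :
    ∀ y, HasDerivAt g (F (g y))⁻¹ y := by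
  have hdf : ∀ u, deriv f u = F u := fun u => (hF u).deriv
  have hmono : StrictMono f := strictMono_of_deriv_pos fun u => by
    rw [hdf]; exact hδ.trans_le (hFlb u)
  have hgc : Continuous g := cont_of_inverse hmono hg₂
  intro y
  exact HasDerivAt.of_local_left_inverse hgc.continuousAt (hF (g y))
    (ne_of_gt (hδ.trans_le (hFlb _))) (Filter.Eventually.of_forall hg₂)


/-- With `σ_φ = 1/φ'` and `h_φ = -φ''/(φ')³`, one has, for every `v`,
`σ_{f̄₁}(ḡ(v)) = ∫_K σ_{f₁}(g(v+V y)) d𝔪(y)` and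
`h_{f̄₁}(ḡ(v)) = ∫_K h_{f₁}(g(v+V y)) d𝔪(y)`. -/
theorem stmt_2
    (δ₀ L : ℝ) (hδ₀ : 0 < δ₀) (hδL : δ₀ ≤ L)
    (f₁ : ℝ → ℝ) (hf₁ : ContDiff ℝ 3 f₁)
    (hf₁lb : ∀ u, δ₀ ≤ deriv f₁ u) (hf₁ub : ∀ u, deriv f₁ u ≤ L)
    (C₂ C₃ : ℝ)
    (hf₁'' : ∀ u, |iteratedDeriv 2 f₁ u| ≤ C₂)
    (hf₁''' : ∀ u, |iteratedDeriv 3 f₁ u| ≤ C₃)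
    (K : Type*) [MeasurableSpace K] (𝔪 : Measure K) [IsProbabilityMeasure 𝔪]
    (V : K → ℝ) (hV : Measurable V) (CV : ℝ) (hVbd : ∀ y, |V y| ≤ CV)
    (g : ℝ → ℝ) (hg₁ : Function.LeftInverse g f₁) (hg₂ : Function.RightInverse g f₁)
    (gbar : ℝ → ℝ) (hgbar : ∀ v, gbar v = ∫ y, g (v + V y) ∂𝔪)
    (fbar₁ : ℝ → ℝ) (hfb₁ : Function.LeftInverse fbar₁ gbar)
    (hfb₂ : Function.RightInverse fbar₁ gbar) :
    ∀ v : ℝ,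
      (1 / deriv fbar₁ (gbar v) = ∫ y, 1 / deriv f₁ (g (v + V y)) ∂𝔪) ∧
      (-(iteratedDeriv 2 fbar₁ (gbar v)) / (deriv fbar₁ (gbar v)) ^ 3 =
        ∫ y, -(iteratedDeriv 2 f₁ (g (v + V y))) / (deriv f₁ (g (v + V y))) ^ 3 ∂𝔪) := by
  have hLpos : 0 < L := hδ₀.trans_le hδL
  -- f₁ derivatives
  have hf₁d : Differentiable ℝ f₁ := hf₁.differentiable (by norm_num)
  have hd1 : ∀ u, HasDerivAt f₁ (deriv f₁ u) u := fun u => (hf₁d u).hasDerivAt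
  have hf₁' : ContDiff ℝ 2 (deriv f₁) := by
    have h : ContDiff ℝ ((2 : ℕ) + 1) f₁ := by exact_mod_cast hf₁
    exact (contDiff_succ_iff_deriv.mp h).2.2
  have hf₁'d : Differentiable ℝ (deriv f₁) := hf₁'.differentiable (by norm_num)
  have hd2 : ∀ u, HasDerivAt (deriv f₁) (deriv (deriv f₁) u) u := fun u => (hf₁'d u).hasDerivAt
  have hf₁''c : Continuous (deriv (deriv f₁)) := by
    have h : ContDiff ℝ ((1 : ℕ) + 1) (deriv f₁) := by exact_mod_cast hf₁'
    exact ((contDiff_succ_iff_deriv.mp h).2.2).continuous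
  -- positivity
  have hFpos : ∀ u, 0 < deriv f₁ u := fun u => hδ₀.trans_le (hf₁lb u)
  have hFne : ∀ u, deriv f₁ u ≠ 0 := fun u => ne_of_gt (hFpos u)
  -- g derivatives
  have hgd : ∀ y, HasDerivAt g (deriv f₁ (g y))⁻¹ y := inverse_hasDerivAt hδ₀ hd1 hf₁lb hg₂
  have hgdiff : Differentiable ℝ g := fun y => (hgd y).differentiableAt
  have hgc : Continuous g := hgdiff.continuous
  -- the second-derivative function of g
  set e : ℝ → ℝ := fun u => -(deriv (deriv f₁) (g u)) / (deriv f₁ (g u)) ^ 3 with he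
  have hgd2 : ∀ u, HasDerivAt (fun u => (deriv f₁ (g u))⁻¹) (e u) u := by
    intro u
    have h1 : HasDerivAt (fun u => deriv f₁ (g u))
        (deriv (deriv f₁) (g u) * (deriv f₁ (g u))⁻¹) u := (hd2 (g u)).comp u (hgd u)
    have h2 := h1.inv (hFne (g u))
    refine h2.congr_deriv ?_
    rw [he]
    field_simp
  have hec : Continuous e := by
    apply Continuous.div
    · exact (hf₁''c.comp hgc).neg
    · exact ((hf₁'.continuous.comp hgc).pow 3)
    · intro x
      exact pow_ne_zero 3 (hFne (g x))
  -- bounds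
  have hC₂0 : 0 ≤ C₂ := le_trans (abs_nonneg _) (hf₁'' 0)
  have hgdbd : ∀ u, |(deriv f₁ (g u))⁻¹| ≤ δ₀⁻¹ := by
    intro u
    rw [abs_of_pos (inv_pos.mpr (hFpos (g u)))]
    exact inv_anti₀ hδ₀ (hf₁lb (g u))
  have hid2 : iteratedDeriv 2 f₁ = deriv (deriv f₁) := by
    rw [show (2 : ℕ) = 1 + 1 from rfl, iteratedDeriv_succ, iteratedDeriv_one]
  have hebd : ∀ u, |e u| ≤ C₂ / δ₀ ^ 3 := by
    intro u
    rw [he]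
    rw [abs_div, abs_neg, abs_pow, abs_of_pos (hFpos (g u))]
    apply div_le_div₀ (by positivity)
    · rw [← hid2]; exact hf₁'' (g u)
    · positivity
    · exact pow_le_pow_left₀ hδ₀.le (hf₁lb (g u)) 3
  -- integrability of bounded measurable functions
  have hint : ∀ (φ : K → ℝ) (c : ℝ), Measurable φ → (∀ y, |φ y| ≤ c) → Integrable φ 𝔪 := by
    intro φ c hm hb
    exact ⟨hm.aestronglyMeasurable, HasFiniteIntegral.of_bounded (C := c)
      (Filter.Eventually.of_forall fun y => by simpa using hb y)⟩
  -- g is Lipschitz hence y ↦ g (x + V y) is bounded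
  have hglip : LipschitzWith ⟨δ₀⁻¹, by positivity⟩ g := by
    apply lipschitzWith_of_nnnorm_deriv_le hgdiff
    intro x
    rw [(hgd x).deriv]
    refine NNReal.coe_le_coe.mp ?_; rw [coe_nnnorm]; show _ ≤ δ₀⁻¹
    simpa [Real.norm_eq_abs, abs_inv] using hgdbd x
  have hgbd : ∀ x : ℝ, |g x| ≤ |g 0| + δ₀⁻¹ * |x| := by
    intro x
    have := hglip.dist_le_mul x 0
    simp only [Real.dist_eq, sub_zero] at this
    calc |g x| ≤ |g x - g 0| + |g 0| := by
          simpa using abs_add_le (g x - g 0) (g 0)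
      _ ≤ δ₀⁻¹ * |x| + |g 0| := add_le_add_left (by exact_mod_cast this) _
      _ = |g 0| + δ₀⁻¹ * |x| := by ring
  -- measurability helpers
  have hmeas : ∀ v : ℝ, Measurable fun y => v + V y := fun v => measurable_const.add hV
  have hFmeas : ∀ v : ℝ, Measurable fun y => g (v + V y) := fun v => hgc.measurable.comp (hmeas v)
  have hF'meas : ∀ v : ℝ, Measurable fun y => (deriv f₁ (g (v + V y)))⁻¹ :=
    fun v => ((hf₁'.continuous.comp hgc).measurable.comp (hmeas v)).inv
  have hEmeas : ∀ v : ℝ, Measurable fun y => e (v + V y) := fun v => hec.measurable.comp (hmeas v)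
  -- integrability
  have hFint : ∀ v : ℝ, Integrable (fun y => g (v + V y)) 𝔪 := by
    intro v
    apply hint _ (|g 0| + δ₀⁻¹ * (|v| + CV)) (hFmeas v)
    intro y
    refine (hgbd _).trans ?_
    have h1 : |v + V y| ≤ |v| + CV := (abs_add_le _ _).trans (add_le_add_right (hVbd y) _)
    have h2 : (0:ℝ) < δ₀⁻¹ := inv_pos.mpr hδ₀
    nlinarith
  have hF'int : ∀ v : ℝ, Integrable (fun y => (deriv f₁ (g (v + V y)))⁻¹) 𝔪 :=
    fun v => hint _ δ₀⁻¹ (hF'meas v) (fun y => hgdbd _)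
  have hEint : ∀ v : ℝ, Integrable (fun y => e (v + V y)) 𝔪 :=
    fun v => hint _ (C₂ / δ₀ ^ 3) (hEmeas v) (fun y => hebd _)
  set G : ℝ → ℝ := fun v => ∫ y, (deriv f₁ (g (v + V y)))⁻¹ ∂𝔪 with hG
  set H : ℝ → ℝ := fun v => ∫ y, e (v + V y) ∂𝔪 with hH
  -- derivative of gbar
  have hgbarD : ∀ v : ℝ, HasDerivAt gbar (G v) v := by
    intro v
    have key := hasDerivAt_integral_of_dominated_loc_of_deriv_le (μ := 𝔪)
      (F := fun x y => g (x + V y)) (F' := fun x y => (deriv f₁ (g (x + V y)))⁻¹)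
      (x₀ := v) (bound := fun _ => δ₀⁻¹) (Metric.ball_mem_nhds v one_pos)
      (Filter.Eventually.of_forall fun x => (hFmeas x).aestronglyMeasurable)
      (hFint v) ((hF'meas v).aestronglyMeasurable)
      (Filter.Eventually.of_forall fun y x _ => by
        simpa [Real.norm_eq_abs, abs_inv] using hgdbd (x + V y))
      (integrable_const _)
      (Filter.Eventually.of_forall fun y x _ => by
        simpa [Function.comp_def] using (hgd (x + V y)).comp x ((hasDerivAt_id x).add_const (V y)))
    have hge : gbar = fun x => ∫ y, g (x + V y) ∂𝔪 := funext hgbar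
    rw [hge]
    exact key.2
  have hGD : ∀ v : ℝ, HasDerivAt G (H v) v := by
    intro v
    have key := hasDerivAt_integral_of_dominated_loc_of_deriv_le (μ := 𝔪)
      (F := fun x y => (deriv f₁ (g (x + V y)))⁻¹) (F' := fun x y => e (x + V y))
      (x₀ := v) (bound := fun _ => C₂ / δ₀ ^ 3) (Metric.ball_mem_nhds v one_pos)
      (Filter.Eventually.of_forall fun x => (hF'meas x).aestronglyMeasurable)
      (hF'int v) ((hEmeas v).aestronglyMeasurable)
      (Filter.Eventually.of_forall fun y x _ => by
        simpa [Real.norm_eq_abs] using hebd (x + V y))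
      (integrable_const _)
      (Filter.Eventually.of_forall fun y x _ => by
        simpa [Function.comp_def] using (hgd2 (x + V y)).comp x ((hasDerivAt_id x).add_const (V y)))
    exact key.2
  -- lower bound for G
  have hGlb : ∀ v, L⁻¹ ≤ G v := by
    intro v
    have hle : ∫ (_ : K), L⁻¹ ∂𝔪 ≤ G v := by
      apply integral_mono (integrable_const _) (hF'int v)
      intro y
      exact inv_anti₀ (hFpos _) (hf₁ub _)
    simpa using hle
  have hGpos : ∀ v, 0 < G v := fun v => lt_of_lt_of_le (inv_pos.mpr hLpos) (hGlb v)
  have hfd : ∀ w, HasDerivAt fbar₁ (G (fbar₁ w))⁻¹ w :=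
    inverse_hasDerivAt (inv_pos.mpr hLpos) hgbarD hGlb hfb₂
  intro v
  have hGne : G v ≠ 0 := ne_of_gt (hGpos v)
  have hfbgv : fbar₁ (gbar v) = v := hfb₁ v
  have hd_fb : deriv fbar₁ (gbar v) = (G v)⁻¹ := by
    rw [(hfd (gbar v)).deriv, hfbgv]
  have hdf_eq : deriv fbar₁ = fun w => (G (fbar₁ w))⁻¹ := funext fun w => (hfd w).deriv
  have hcomp : HasDerivAt (fun w => G (fbar₁ w)) (H v * (G v)⁻¹) (gbar v) := by
    have h := (hGD (fbar₁ (gbar v))).comp (gbar v) (hfd (gbar v))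
    rw [hfbgv] at h
    exact h
  have hinv : HasDerivAt (fun w => (G (fbar₁ w))⁻¹)
      (-(H v * (G v)⁻¹) / (G v) ^ 2) (gbar v) := by
    have h := hcomp.inv (by rw [hfbgv]; exact hGne)
    rw [hfbgv] at h
    exact h
  have hitd : iteratedDeriv 2 fbar₁ (gbar v) = -(H v * (G v)⁻¹) / (G v) ^ 2 := by
    rw [show (2:ℕ) = 1+1 from rfl, iteratedDeriv_succ, iteratedDeriv_one, hdf_eq]
    exact hinv.deriv
  constructor
  · rw [hd_fb, one_div, inv_inv, hG]
    simp only [one_div]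
  · rw [hitd, hd_fb]
    have hfin : -(-(H v * (G v)⁻¹) / (G v) ^ 2) / ((G v)⁻¹) ^ 3 = H v := by
      field_simp
    rw [hfin, hH]
    simp only [he, hid2]
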